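/- (Assertion 4, duality: the multi-pinning energy density is the convex conjugate of the multi-pinning co-energy density.) Let E be a finite-dimensional real inner product space, let μ₀ > 0 and N ≥ 1, and for k = 1,…,N let m_k > 0, χ_k ≥ 0, J_{p,k} ∈ E, and let U_k : E → ℝ be continuous and m_k-strongly convex. Define w_*(H) = (μ₀/2)‖H‖² − Σ_{k=1}^{N} inf_{J ∈ E} ( U_k(J) − ⟪H, J⟫ + χ_k‖J − J_{p,k}‖ ) and w(B) = inf_{(J_1,…,J_N) ∈ E^N} ( (1/(2μ₀))‖B − Σ_k J_k‖² + Σ_k ( U_k(J_k) + χ_k‖J_k − J_{p,k}‖ ) ). Then for every B ∈ E, w(B) = sup_{H ∈ E} ( ⟪H, B⟫ − w_*(H) ). -/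

import Mathlib

open RealInnerProductSpace

lemma strongConvexOn_congr {E : Type*} [NormedAddCommGroup E] [InnerProductSpace ℝ E]
    {f g : E → ℝ} {m : ℝ} (h : ∀ x, f x = g x) (hf : StrongConvexOn Set.univ m f) :
    StrongConvexOn Set.univ m g := by
  have : f = g := funext h
  exact this ▸ hf

lemma aux_convexpart {E : Type*} [NormedAddCommGroup E] [InnerProductSpace ℝ E]
    (χ : ℝ) (hχ : 0 ≤ χ) (Jp H : E) :
    ConvexOn ℝ Set.univ (fun J => χ * ‖J - Jp‖ - ⟪H, J⟫) := by
  refine ⟨convex_univ, fun x _ y _ a b ha hb hab => ?_⟩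
  have h1 : a • x + b • y - Jp = a • (x - Jp) + b • (y - Jp) := by
    have h' : a • (x - Jp) + b • (y - Jp) = a • x + b • y - (a + b) • Jp := by
      rw [add_smul, smul_sub, smul_sub]; abel
    rw [h', hab, one_smul]
  have h2 : ‖a • x + b • y - Jp‖ ≤ a * ‖x - Jp‖ + b * ‖y - Jp‖ := by
    rw [h1]
    refine (norm_add_le _ _).trans ?_
    rw [norm_smul, norm_smul, Real.norm_eq_abs, Real.norm_eq_abs, abs_of_nonneg ha,
      abs_of_nonneg hb]
  have h3 : ⟪H, a • x + b • y⟫ = a * ⟪H, x⟫ + b * ⟪H, y⟫ := by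
    rw [inner_add_right, real_inner_smul_right, real_inner_smul_right]
  simp only [smul_eq_mul]
  rw [h3]
  nlinarith [mul_le_mul_of_nonneg_left h2 hχ]

lemma strong_plus {E : Type*} [NormedAddCommGroup E] [InnerProductSpace ℝ E]
    {m : ℝ} {f : E → ℝ} (hf : StrongConvexOn Set.univ m f)
    (χ : ℝ) (hχ : 0 ≤ χ) (Jp H : E) :
    StrongConvexOn Set.univ m (fun J => f J - ⟪H, J⟫ + χ * ‖J - Jp‖) := by
  have hg := (aux_convexpart χ hχ Jp H).uniformConvexOn_zero
  have h2 := hf.add hg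
  have h0 : ((fun r : ℝ => m / 2 * r ^ 2) + 0) = fun r : ℝ => m / 2 * r ^ 2 := add_zero _
  rw [h0] at h2
  exact strongConvexOn_congr (fun x => by simp [Pi.add_apply]; ring) h2

lemma strong_growth {E : Type*} [NormedAddCommGroup E] [InnerProductSpace ℝ E]
    [FiniteDimensional ℝ E]
    {m : ℝ} (hm : 0 < m) {f : E → ℝ} (hf : Continuous f)
    (hc : StrongConvexOn Set.univ m f) :
    ∃ C : ℝ, 0 ≤ C ∧ ∀ J : E, m / 4 * ‖J‖ ^ 2 - C * (‖J‖ + 1) ≤ f J := by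
  obtain ⟨z, hz, hmin⟩ := (isCompact_closedBall (0:E) 1).exists_isMinOn
    ⟨0, by simp⟩ hf.continuousOn
  set c := f z with hc'
  refine ⟨|c| + |f 0| + m, by positivity, fun J => ?_⟩
  rcases le_or_gt ‖J‖ 1 with hJ | hJ
  · have h1 : c ≤ f J := hmin (by simpa [Metric.mem_closedBall, dist_eq_norm] using hJ)
    have h2 : (0:ℝ) ≤ ‖J‖ := norm_nonneg J
    have hx2 : ‖J‖ ^ 2 ≤ 1 := by nlinarith
    nlinarith [hx2, hm.le, abs_nonneg (f 0), abs_nonneg c, neg_abs_le c,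
      mul_nonneg (by positivity : (0:ℝ) ≤ |c| + |f 0| + m) h2]
  · have hr : (0:ℝ) < ‖J‖ := lt_trans one_pos hJ
    set r := ‖J‖ with hrdef
    set t := 1 / r with htdef
    have ht0 : 0 < t := by positivity
    have ht1 : t < 1 := by rw [htdef]; rw [div_lt_one hr]; exact hJ
    have htr : t * r = 1 := by rw [htdef]; field_simp
    have key := hc.2 (Set.mem_univ J) (Set.mem_univ (0:E)) ht0.le (by linarith : (0:ℝ) ≤ 1 - t)
      (by ring)
    simp only [smul_zero, add_zero, sub_zero, smul_eq_mul] at key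
    have hnorm : ‖t • J‖ = 1 := by
      rw [norm_smul, Real.norm_eq_abs, abs_of_pos ht0, ← hrdef, htr]
    have h1 : c ≤ f (t • J) := hmin (by simp [Metric.mem_closedBall, dist_eq_norm, hnorm])
    -- key : f (t • J) ≤ t * f J + (1 - t) * f 0 - t * (1 - t) * (m / 2 * r ^ 2)
    have h2 : c ≤ t * f J + (1 - t) * f 0 - t * (1 - t) * (m / 2 * r ^ 2) := le_trans h1 key
    -- multiply by r
    have h3 : r * c ≤ f J + (r - 1) * f 0 - (m / 2) * (r ^ 2 - r) := by
      have := mul_le_mul_of_nonneg_left h2 hr.le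
      have e1 : r * (t * f J + (1 - t) * f 0 - t * (1 - t) * (m / 2 * r ^ 2))
          = (r * t) * f J + (r - r * t) * f 0 - (m / 2) * ((r * t) * r ^ 2 - (r*t) * (t * r^2)) := by
        ring
      have e2 : r * t = 1 := by linarith [htr, mul_comm t r]
      have e3 : t * r ^ 2 = r := by
        have : t * r ^ 2 = (t * r) * r := by ring
        rw [this, htr, one_mul]
      rw [e1, e2, e3] at this
      simpa using this
    nlinarith [neg_abs_le c, abs_nonneg c, abs_nonneg (f 0), neg_abs_le (f 0),
      le_abs_self (f 0), le_abs_self c, sq_nonneg r, hr.le]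

lemma strong_bddBelow {E : Type*} [NormedAddCommGroup E] [InnerProductSpace ℝ E]
    [FiniteDimensional ℝ E]
    {m : ℝ} (hm : 0 < m) {f : E → ℝ} (hf : Continuous f)
    (hc : StrongConvexOn Set.univ m f) :
    ∃ b : ℝ, ∀ J : E, b ≤ f J := by
  obtain ⟨C, hC0, hC⟩ := strong_growth hm hf hc
  refine ⟨-(C ^ 2 / m + C + C), fun J => le_trans ?_ (hC J)⟩
  have hn : (0:ℝ) ≤ ‖J‖ := norm_nonneg J
  have hdm : C ^ 2 / m * m = C ^ 2 := div_mul_cancel₀ _ hm.ne'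
  nlinarith [sq_nonneg (m * ‖J‖ - 2 * C), hm, hC0, hn, hdm, mul_pos hm hm,
    mul_nonneg hC0 hn]

lemma young_ineq {E : Type*} [NormedAddCommGroup E] [InnerProductSpace ℝ E]
    {μ₀ : ℝ} (hμ₀ : 0 < μ₀) (H x : E) :
    ⟪H, x⟫ - μ₀ / 2 * ‖H‖ ^ 2 ≤ 1 / (2 * μ₀) * ‖x‖ ^ 2 := by
  rw [← mul_le_mul_iff_of_pos_right (by positivity : (0:ℝ) < 2 * μ₀)]
  have he : 1 / (2 * μ₀) * ‖x‖ ^ 2 * (2 * μ₀) = ‖x‖ ^ 2 := by field_simp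
  rw [he]
  have hi := real_inner_le_norm H x
  nlinarith [sq_nonneg (‖x‖ - μ₀ * ‖H‖),
    mul_le_mul_of_nonneg_left hi (by positivity : (0:ℝ) ≤ 2 * μ₀)]

lemma limit_aux (a c : ℝ) (hc0 : 0 ≤ c)
    (h : ∀ t : ℝ, 0 < t → t ≤ 1 → 0 ≤ a + t * c) : 0 ≤ a := by
  by_contra hneg
  push_neg at hneg
  have hta : 0 < -a / (2 * (c + 1)) := div_pos (by linarith) (by linarith)
  have ht0 : 0 < min 1 (-a / (2 * (c + 1))) := lt_min one_pos hta
  have h4 := h _ ht0 (min_le_left _ _)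
  have h5 : min 1 (-a / (2 * (c + 1))) * (2 * (c + 1)) ≤ -a :=
    (le_div_iff₀ (by positivity : (0:ℝ) < 2 * (c + 1))).1 (min_le_right _ _)
  nlinarith [h4, h5, mul_nonneg ht0.le hc0, ht0, hneg]

set_option maxHeartbeats 2000000 in
/-- Assertion 4, duality: the multi-pinning energy density is the convex
conjugate of the multi-pinning co-energy density. -/
theorem multi_pinning_energy_is_conjugate_of_coenergy
    {E : Type*} [NormedAddCommGroup E] [InnerProductSpace ℝ E] [FiniteDimensional ℝ E]
    (μ₀ : ℝ) (hμ₀ : 0 < μ₀) (N : ℕ) (hN : 1 ≤ N)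
    (m χ : Fin N → ℝ) (hm : ∀ k, 0 < m k) (hχ : ∀ k, 0 ≤ χ k)
    (Jp : Fin N → E)
    (U : Fin N → E → ℝ) (hUcont : ∀ k, Continuous (U k))
    (hUconv : ∀ k, StrongConvexOn Set.univ (m k) (U k)) :
    ∀ B : E,
      (⨅ Js : Fin N → E,
        (1 / (2 * μ₀) * ‖B - ∑ k, Js k‖ ^ 2
          + ∑ k, (U k (Js k) + χ k * ‖Js k - Jp k‖)))
      = ⨆ H : E, (⟪H, B⟫ -
          (μ₀ / 2 * ‖H‖ ^ 2
            - ∑ k, (⨅ J : E, (U k J - ⟪H, J⟫ + χ k * ‖J - Jp k‖)))) := by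
  intro B
  classical
  -- the strongly convex integrands, possibly tilted by a field H
  have hHcont : ∀ (H : E) (k : Fin N),
      Continuous (fun J : E => U k J - ⟪H, J⟫ + χ k * ‖J - Jp k‖) := fun H k =>
    ((hUcont k).sub (continuous_const.inner continuous_id)).add
      (continuous_const.mul ((continuous_id.sub continuous_const).norm))
  have hHstrong : ∀ (H : E) (k : Fin N),
      StrongConvexOn Set.univ (m k) (fun J : E => U k J - ⟪H, J⟫ + χ k * ‖J - Jp k‖) :=
    fun H k => strong_plus (hUconv k) (χ k) (hχ k) (Jp k) H
  have hgcont : ∀ k : Fin N, Continuous (fun J : E => U k J + χ k * ‖J - Jp k‖) := fun k => by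
    have := hHcont 0 k
    simpa using this
  have hgstrong : ∀ k : Fin N,
      StrongConvexOn Set.univ (m k) (fun J : E => U k J + χ k * ‖J - Jp k‖) := fun k =>
    strongConvexOn_congr (fun J => by simp) (hHstrong 0 k)
  -- bdd below of tilted integrands
  have hbdd : ∀ (H : E) (k : Fin N),
      BddBelow (Set.range fun J : E => U k J - ⟪H, J⟫ + χ k * ‖J - Jp k‖) := by
    intro H k
    obtain ⟨b, hb⟩ := strong_bddBelow (hm k) (hHcont H k) (hHstrong H k)
    exact ⟨b, by rintro y ⟨J, rfl⟩; exact hb J⟩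
  -- the primal objective
  set G : (Fin N → E) → ℝ := fun Js =>
    1 / (2 * μ₀) * ‖B - ∑ k, Js k‖ ^ 2 + ∑ k, (U k (Js k) + χ k * ‖Js k - Jp k‖) with hGdef
  have hGcont : Continuous G := by
    apply Continuous.add
    · exact continuous_const.mul (((continuous_const.sub
        (continuous_finset_sum _ fun k _ => continuous_apply k)).norm).pow 2)
    · exact continuous_finset_sum _ fun k _ =>
        ((hUcont k).comp (continuous_apply k)).add
          (continuous_const.mul (((continuous_apply k).sub continuous_const).norm))
  -- uniform growth constants
  choose Cg hCg0 hCg using fun k => strong_growth (hm k) (hgcont k) (hgstrong k)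
  have hNE : (Finset.univ : Finset (Fin N)).Nonempty := ⟨⟨0, hN⟩, Finset.mem_univ _⟩
  set mm : ℝ := Finset.univ.inf' hNE m with hmmdef
  have hmm0 : 0 < mm := (Finset.lt_inf'_iff hNE).2 fun k _ => hm k
  have hmmle : ∀ k, mm ≤ m k := fun k => Finset.inf'_le _ (Finset.mem_univ k)
  set CC : ℝ := ∑ k, Cg k with hCCdef
  clear_value mm CC
  have hCC0 : 0 ≤ CC := by rw [hCCdef]; exact Finset.sum_nonneg fun k _ => hCg0 k
  have hCCge : ∀ k, Cg k ≤ CC := fun k => by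
    rw [hCCdef]; exact Finset.single_le_sum (fun j _ => hCg0 j) (Finset.mem_univ k)
  -- coercivity lower bound for G
  have hGlb : ∀ Js : Fin N → E,
      mm / 4 * (∑ k, ‖Js k‖ ^ 2) - CC * ((∑ k, ‖Js k‖) + N) ≤ G Js := by
    intro Js
    have h1 : ∀ k : Fin N, mm / 4 * ‖Js k‖ ^ 2 - CC * (‖Js k‖ + 1)
        ≤ U k (Js k) + χ k * ‖Js k - Jp k‖ := by
      intro k
      refine le_trans ?_ (hCg k (Js k))
      nlinarith [hCCge k, norm_nonneg (Js k), sq_nonneg ‖Js k‖, hmmle k]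
    have h2 := Finset.sum_le_sum (s := (Finset.univ : Finset (Fin N))) fun k _ => h1 k
    have h3 : ∑ k, (mm / 4 * ‖Js k‖ ^ 2 - CC * (‖Js k‖ + 1))
        = mm / 4 * (∑ k, ‖Js k‖ ^ 2) - CC * ((∑ k, ‖Js k‖) + N) := by
      rw [Finset.sum_sub_distrib, ← Finset.mul_sum, ← Finset.mul_sum, Finset.sum_add_distrib,
        Finset.sum_const, Finset.card_univ, Fintype.card_fin]
      push_cast
      ring
    have h4 : (0:ℝ) ≤ 1 / (2 * μ₀) * ‖B - ∑ k, Js k‖ ^ 2 := by positivity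
    rw [h3] at h2
    calc mm / 4 * (∑ k, ‖Js k‖ ^ 2) - CC * ((∑ k, ‖Js k‖) + N)
        ≤ ∑ k, (U k (Js k) + χ k * ‖Js k - Jp k‖) := h2
      _ ≤ G Js := by rw [hGdef]; dsimp only; linarith
  -- existence of a global minimizer of G
  set A : ℝ := CC + CC * N + |G 0| + 1 with hAdef
  clear_value A
  have hA1 : 1 ≤ A := by
    have h1 := abs_nonneg (G 0)
    have h2 : 0 ≤ CC * N := mul_nonneg hCC0 (Nat.cast_nonneg N)
    rw [hAdef]; linarith
  set R : ℝ := (4 * N / mm) * A + 1 with hRdef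
  clear_value R
  have hN1 : (1:ℝ) ≤ N := by exact_mod_cast hN
  have hR1 : 1 ≤ R := by
    have h1 : 0 ≤ (4 * N / mm) * A := by positivity
    rw [hRdef]; linarith
  have hout : ∀ Js : Fin N → E, R < ‖Js‖ → G 0 < G Js := by
    intro Js hJs
    set s : ℝ := ∑ k, ‖Js k‖ with hsdef
    clear_value s
    have hns : ‖Js‖ ≤ s := by
      rw [hsdef]
      refine (pi_norm_le_iff_of_nonneg (Finset.sum_nonneg fun k _ => norm_nonneg _)).2 ?_
      intro i
      exact Finset.single_le_sum (fun k _ => norm_nonneg _) (Finset.mem_univ i)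
    have hsnn : 0 ≤ s := le_trans (norm_nonneg _) hns
    have hsR : R < s := lt_of_lt_of_le hJs hns
    have hQ : s ^ 2 ≤ (N : ℝ) * ∑ k, ‖Js k‖ ^ 2 := by
      rw [hsdef]
      have := sq_sum_le_card_mul_sum_sq (s := (Finset.univ : Finset (Fin N)))
        (f := fun k => ‖Js k‖)
      simpa [Finset.card_univ] using this
    have hlb := hGlb Js
    -- G Js ≥ mm/(4N) s² - CC s - CC N > G 0
    have hs1 : 1 ≤ s := le_trans hR1 hsR.le
    have hkey : mm / (4 * N) * s ^ 2 - CC * (s + N) ≤ G Js := by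
      refine le_trans ?_ hlb
      have h5 : mm / (4 * N) * s ^ 2 ≤ mm / 4 * ∑ k, ‖Js k‖ ^ 2 := by
        rw [div_mul_eq_mul_div, div_le_iff₀ (by positivity)]
        calc mm * s ^ 2 ≤ mm * ((N:ℝ) * ∑ k, ‖Js k‖ ^ 2) := by
              exact mul_le_mul_of_nonneg_left hQ hmm0.le
          _ = mm / 4 * (∑ k, ‖Js k‖ ^ 2) * (4 * N) := by ring
      have h6 : CC * (s + ↑N) = CC * ((∑ k, ‖Js k‖) + ↑N) := by rw [hsdef]
      linarith only [h5, h6]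
    have hmmN : mm / (4 * N) * R ≥ A := by
      rw [hRdef]
      rw [ge_iff_le, div_mul_eq_mul_div, le_div_iff₀ (by positivity)]
      have : mm * ((4 * N / mm) * A + 1) = 4 * N * A + mm := by
        field_simp
      rw [this]
      nlinarith [hmm0.le]
    -- now conclude
    have hval : G 0 < mm / (4 * N) * s ^ 2 - CC * (s + N) := by
      have hmono : mm / (4 * N) * R * s ≤ mm / (4 * N) * s ^ 2 := by
        have : mm / (4 * N) * R * s ≤ mm / (4 * N) * s * s := by
          have := mul_le_mul_of_nonneg_right (mul_le_mul_of_nonneg_left hsR.le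
            (by positivity : (0:ℝ) ≤ mm / (4 * N))) (by linarith : (0:ℝ) ≤ s)
          linarith
        nlinarith
      have hAs : A * s ≤ mm / (4 * N) * s ^ 2 := by
        have := mul_le_mul_of_nonneg_right hmmN (by linarith : (0:ℝ) ≤ s)
        linarith
      have hGabs : G 0 ≤ |G 0| := le_abs_self _
      have hexp : A * s = CC * s + CC * N * s + |G 0| * s + s := by rw [hAdef]; ring
      have p1 := mul_le_mul_of_nonneg_left hs1 (abs_nonneg (G 0))
      have p2 := mul_le_mul_of_nonneg_left hs1
        (mul_nonneg hCC0 (Nat.cast_nonneg (α := ℝ) N))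
      rw [mul_one] at p1 p2
      set q : ℝ := mm / (4 * ↑N) * s ^ 2 with hqdef
      clear_value q
      set g0 : ℝ := G 0 with hg0def
      set ag : ℝ := |g0| with hagdef
      clear_value g0 ag
      linarith only [hAs, hexp, hGabs, p1, p2, hs1]
    exact lt_of_lt_of_le hval hkey
  obtain ⟨Jstar, hJstar_mem, hJstar_min⟩ :=
    (isCompact_closedBall (0 : Fin N → E) R).exists_isMinOn
      ⟨0, Metric.mem_closedBall_self (by linarith)⟩ hGcont.continuousOn
  have hglobal : ∀ Js, G Jstar ≤ G Js := by
    intro Js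
    rcases le_or_gt ‖Js‖ R with h | h
    · exact hJstar_min (by simpa [Metric.mem_closedBall, dist_eq_norm] using h)
    · have h0 : G Jstar ≤ G 0 := hJstar_min (Metric.mem_closedBall_self (by linarith))
      exact le_trans h0 (hout Js h).le
  -- the optimal field
  set xstar : E := B - ∑ k, Jstar k with hxstar
  set Hstar : E := μ₀⁻¹ • xstar with hHstarDef
  clear_value Hstar
  clear_value xstar
  -- sum manipulation for coordinate updates
  have sum_upd_vec : ∀ (k : Fin N) (v : E),
      ∑ j, Function.update Jstar k v j = (∑ j, Jstar j) - Jstar k + v := by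
    intro k v
    rw [Finset.sum_update_of_mem (Finset.mem_univ k),
      Finset.sum_eq_sum_sdiff_singleton_add (Finset.mem_univ k) Jstar]
    abel
  have sum_upd_g : ∀ (k : Fin N) (v : E),
      ∑ j, (U j (Function.update Jstar k v j) + χ j * ‖Function.update Jstar k v j - Jp j‖)
        = (∑ j, (U j (Jstar j) + χ j * ‖Jstar j - Jp j‖))
          - (U k (Jstar k) + χ k * ‖Jstar k - Jp k‖) + (U k v + χ k * ‖v - Jp k‖) := by
    intro k v
    have he : (fun j => U j (Function.update Jstar k v j)
          + χ j * ‖Function.update Jstar k v j - Jp j‖)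
        = Function.update (fun j => U j (Jstar j) + χ j * ‖Jstar j - Jp j‖) k
            (U k v + χ k * ‖v - Jp k‖) := by
      funext j
      rcases eq_or_ne j k with rfl | hj
      · simp
      · simp [Function.update_of_ne hj]
    rw [he, Finset.sum_update_of_mem (Finset.mem_univ k),
      Finset.sum_eq_sum_sdiff_singleton_add (Finset.mem_univ k)
        (fun j => U j (Jstar j) + χ j * ‖Jstar j - Jp j‖)]
    ring
  -- subgradient inequality at the minimizer
  have hsub : ∀ (k : Fin N) (J : E),
      U k (Jstar k) + χ k * ‖Jstar k - Jp k‖ - ⟪Hstar, Jstar k⟫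
        ≤ U k J + χ k * ‖J - Jp k‖ - ⟪Hstar, J⟫ := by
    intro k J
    set d : E := J - Jstar k with hd
    clear_value d
    have hconvg : ConvexOn ℝ Set.univ (fun J' : E => U k J' + χ k * ‖J' - Jp k‖) :=
      (hgstrong k).convexOn (fun r => mul_nonneg (by linarith [(hm k).le] : (0:ℝ) ≤ m k / 2) (sq_nonneg r))
    have hstep : ∀ t : ℝ, 0 < t → t ≤ 1 →
        0 ≤ (U k J + χ k * ‖J - Jp k‖) - (U k (Jstar k) + χ k * ‖Jstar k - Jp k‖)
            - μ₀⁻¹ * ⟪xstar, d⟫ + t * (‖d‖ ^ 2 / (2 * μ₀)) := by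
      intro t ht0 ht1
      have hG := hglobal (Function.update Jstar k (Jstar k + t • d))
      rw [hGdef] at hG
      dsimp only at hG
      rw [sum_upd_vec k, sum_upd_g k] at hG
      have hx : B - ((∑ j, Jstar j) - Jstar k + (Jstar k + t • d)) = xstar - t • d := by
        rw [hxstar]; abel
      rw [hx] at hG
      have hexp : ‖xstar - t • d‖ ^ 2
          = ‖xstar‖ ^ 2 - 2 * (t * ⟪xstar, d⟫) + t ^ 2 * ‖d‖ ^ 2 := by
        rw [norm_sub_sq_real, real_inner_smul_right, norm_smul, Real.norm_eq_abs,
          abs_of_pos ht0, mul_pow]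
      rw [hexp] at hG
      have hpt : Jstar k + t • d = (1 - t) • Jstar k + t • J := by
        rw [hd, smul_sub, sub_smul, one_smul]; abel
      rw [hpt] at hG
      have hcv := hconvg.2 (Set.mem_univ (Jstar k)) (Set.mem_univ J)
        (by linarith : (0:ℝ) ≤ 1 - t) ht0.le (by ring)
      simp only [smul_eq_mul] at hcv
      beta_reduce at hcv
      set S : ℝ := ∑ j, (U j (Jstar j) + χ j * ‖Jstar j - Jp j‖) with hSdef
      set ip : ℝ := ⟪xstar, d⟫ with hipdef
      set nx : ℝ := ‖xstar‖ with hnxdef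
      set nd : ℝ := ‖d‖ with hnddef
      set gk : ℝ := U k (Jstar k) + χ k * ‖Jstar k - Jp k‖ with hgkdef
      set gJ : ℝ := U k J + χ k * ‖J - Jp k‖ with hgJdef
      set fv : ℝ := U k ((1 - t) • Jstar k + t • J)
        + χ k * ‖(1 - t) • Jstar k + t • J - Jp k‖ with hfvdef
      clear_value S ip nx nd gk gJ fv
      have h2 : 1 / (2 * μ₀) * (nx ^ 2 - 2 * (t * ip) + t ^ 2 * nd ^ 2)
          = 1 / (2 * μ₀) * nx ^ 2 - t * (μ₀⁻¹ * ip)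
            + t * (t * (nd ^ 2 / (2 * μ₀))) := by
        field_simp
      rw [← hxstar, ← hnxdef] at hG
      rw [h2] at hG
      have hmul : 0 ≤ t * (gJ - gk - μ₀⁻¹ * ip + t * (nd ^ 2 / (2 * μ₀))) := by
        linarith only [hG, hcv]
      have h3 : t * 0 ≤ t * (gJ - gk - μ₀⁻¹ * ip + t * (nd ^ 2 / (2 * μ₀))) := by
        rw [mul_zero]; exact hmul
      exact le_of_mul_le_mul_left h3 ht0
    have hlim : 0 ≤ (U k J + χ k * ‖J - Jp k‖) - (U k (Jstar k) + χ k * ‖Jstar k - Jp k‖)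
        - μ₀⁻¹ * ⟪xstar, d⟫ :=
      limit_aux _ _ (div_nonneg (sq_nonneg _) (by linarith)) hstep
    have e3 : ⟪xstar, d⟫ = ⟪xstar, J⟫ - ⟪xstar, Jstar k⟫ := by
      rw [hd, inner_sub_right]
    rw [e3] at hlim
    have e1 : ⟪Hstar, Jstar k⟫ = μ₀⁻¹ * ⟪xstar, Jstar k⟫ := by
      rw [hHstarDef, real_inner_smul_left]
    have e2 : ⟪Hstar, J⟫ = μ₀⁻¹ * ⟪xstar, J⟫ := by
      rw [hHstarDef, real_inner_smul_left]
    rw [e1, e2]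
    linarith only [hlim]
  -- value of the inner infima at Hstar
  have hinf_eq : ∀ k : Fin N,
      (⨅ J : E, (U k J - ⟪Hstar, J⟫ + χ k * ‖J - Jp k‖))
        = U k (Jstar k) + χ k * ‖Jstar k - Jp k‖ - ⟪Hstar, Jstar k⟫ := by
    intro k
    apply le_antisymm
    · have h1 : (⨅ J : E, (U k J - ⟪Hstar, J⟫ + χ k * ‖J - Jp k‖))
          ≤ U k (Jstar k) - ⟪Hstar, Jstar k⟫ + χ k * ‖Jstar k - Jp k‖ :=
        ciInf_le (hbdd Hstar k) (Jstar k)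
      linarith only [h1]
    · refine le_ciInf fun J => ?_
      have h := hsub k J
      linarith only [h]
  -- weak duality
  have hub : ∀ H : E,
      (⟪H, B⟫ - (μ₀ / 2 * ‖H‖ ^ 2
          - ∑ k, (⨅ J : E, (U k J - ⟪H, J⟫ + χ k * ‖J - Jp k‖))))
        ≤ G Jstar := by
    intro H
    have h1 : ∀ k : Fin N, (⨅ J : E, (U k J - ⟪H, J⟫ + χ k * ‖J - Jp k‖))
        ≤ U k (Jstar k) - ⟪H, Jstar k⟫ + χ k * ‖Jstar k - Jp k‖ :=
      fun k => ciInf_le (hbdd H k) (Jstar k)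
    have h2 := Finset.sum_le_sum (s := (Finset.univ : Finset (Fin N))) fun k _ => h1 k
    have h3 : ∑ k, (U k (Jstar k) - ⟪H, Jstar k⟫ + χ k * ‖Jstar k - Jp k‖)
        = (∑ k, (U k (Jstar k) + χ k * ‖Jstar k - Jp k‖)) - ⟪H, ∑ k, Jstar k⟫ := by
      rw [inner_sum, ← Finset.sum_sub_distrib]
      exact Finset.sum_congr rfl fun k _ => by ring
    have hY := young_ineq hμ₀ H xstar
    have e4 : ⟪H, xstar⟫ = ⟪H, B⟫ - ⟪H, ∑ k, Jstar k⟫ := by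
      rw [hxstar, inner_sub_right]
    rw [e4] at hY
    rw [hGdef]
    dsimp only
    rw [← hxstar]
    linarith only [h2, h3, hY]
  -- strong duality at Hstar
  have hDstar :
      (⟪Hstar, B⟫ - (μ₀ / 2 * ‖Hstar‖ ^ 2
          - ∑ k, (⨅ J : E, (U k J - ⟪Hstar, J⟫ + χ k * ‖J - Jp k‖))))
        = G Jstar := by
    have h1 : ∑ k, (⨅ J : E, (U k J - ⟪Hstar, J⟫ + χ k * ‖J - Jp k‖))
        = ∑ k, (U k (Jstar k) + χ k * ‖Jstar k - Jp k‖ - ⟪Hstar, Jstar k⟫) :=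
      Finset.sum_congr rfl fun k _ => hinf_eq k
    have h3 : ∑ k, (U k (Jstar k) + χ k * ‖Jstar k - Jp k‖ - ⟪Hstar, Jstar k⟫)
        = (∑ k, (U k (Jstar k) + χ k * ‖Jstar k - Jp k‖)) - ⟪Hstar, ∑ k, Jstar k⟫ := by
      rw [inner_sum, ← Finset.sum_sub_distrib]
    have e1 : ⟪Hstar, xstar⟫ = μ₀⁻¹ * ‖xstar‖ ^ 2 := by
      rw [hHstarDef, real_inner_smul_left, real_inner_self_eq_norm_sq]
    have e2 : ‖Hstar‖ ^ 2 = μ₀⁻¹ ^ 2 * ‖xstar‖ ^ 2 := by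
      rw [hHstarDef, norm_smul, Real.norm_eq_abs, abs_of_pos (inv_pos.2 hμ₀), mul_pow]
    have e4 : ⟪Hstar, B⟫ = μ₀⁻¹ * ‖xstar‖ ^ 2 + ⟪Hstar, ∑ k, Jstar k⟫ := by
      rw [← e1, hxstar, inner_sub_right]; ring
    rw [h1, h3, e2, e4, hGdef]
    dsimp only
    rw [← hxstar]
    field_simp
    ring
  -- assemble
  have hbddG : BddBelow (Set.range G) := ⟨G Jstar, by rintro y ⟨Js, rfl⟩; exact hglobal Js⟩
  have hbddD : BddAbove (Set.range fun H : E =>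
      (⟪H, B⟫ - (μ₀ / 2 * ‖H‖ ^ 2
          - ∑ k, (⨅ J : E, (U k J - ⟪H, J⟫ + χ k * ‖J - Jp k‖))))) :=
    ⟨G Jstar, by rintro y ⟨H, rfl⟩; exact hub H⟩
  apply le_antisymm
  · calc (⨅ Js, G Js) ≤ G Jstar := ciInf_le hbddG Jstar
      _ = _ := hDstar.symm
      _ ≤ _ := le_ciSup hbddD Hstar
  · exact ciSup_le fun H => le_trans (hub H) (le_ciInf hglobal)
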